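/- Let (X_n) be a sequence of random elements of C([0,1], ℝ) such that almost surely each X_n is a monotone (nondecreasing) function on [0,1]. Suppose there is a random element X of C([0,1], ℝ) such that the finite-dimensional distributions of X_n converge to those of X, i.e. for every k and every 0 ≤ t_1 ≤ … ≤ t_k ≤ 1, the random vector (X_n(t_1),…,X_n(t_k)) converges in distribution in ℝ^k to (X(t_1),…,X(t_k)). Then the family of laws of (X_n) is tight in C([0,1], ℝ), and consequently X_n converges in distribution to X in C([0,1], ℝ) with the uniform topology. -/

import Mathlib

open MeasureTheory ProbabilityTheory Filter Topology
open scoped ENNReal NNReal BoundedContinuousFunction unitInterval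

/-- A family of measures `μ n` is tight when for every `ε > 0` there is a compact set `K`
with `μ n K ≥ 1 − ε` for every `n`. -/
def IsTightFamily {E : Type*} [TopologicalSpace E] [MeasurableSpace E]
    (μ : ℕ → Measure E) : Prop :=
  ∀ ε : ℝ≥0∞, 0 < ε → ∃ K : Set E, IsCompact K ∧ ∀ n, 1 - ε ≤ μ n K


namespace BillMono

open Set

noncomputable section

/-- The set of continuous functions with modulus of continuity bound `c` at scale `δ`. -/
def modSet (δ c : ℝ) : Set C(I, ℝ) :=
  {f | ∀ x y : I, dist x y ≤ δ → |f x - f y| ≤ c}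

/-- The set of continuous functions bounded by `M`. -/
def normSet (M : ℝ) : Set C(I, ℝ) := {f | ∀ x : I, |f x| ≤ M}

lemma isClosed_modSet (δ c : ℝ) : IsClosed (modSet δ c) := by
  have : modSet δ c
      = ⋂ (x : I) (y : I) (_ : dist x y ≤ δ), {f : C(I, ℝ) | |f x - f y| ≤ c} := by
    ext f
    constructor
    · intro hf
      simp only [Set.mem_iInter]
      intro x y h; exact hf x y h
    · intro hf x y h
      simp only [Set.mem_iInter] at hf
      exact hf x y h
  rw [this]
  refine isClosed_iInter fun x => isClosed_iInter fun y => isClosed_iInter fun _ => ?_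
  exact isClosed_le (((continuous_eval_const x).sub
    (continuous_eval_const y)).abs) continuous_const

lemma isClosed_normSet (M : ℝ) : IsClosed (normSet M) := by
  have : normSet M = ⋂ (x : I), {f : C(I, ℝ) | |f x| ≤ M} := by
    ext f; simp [normSet]
  rw [this]
  refine isClosed_iInter fun x => ?_
  exact isClosed_le ((continuous_eval_const x).abs) continuous_const

lemma modSet_mono {δ' δ c : ℝ} (h : δ' ≤ δ) : modSet δ c ⊆ modSet δ' c :=
  fun f hf x y hxy => hf x y (hxy.trans h)

lemma normSet_mono {M M' : ℝ} (h : M ≤ M') : normSet M ⊆ normSet M' :=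
  fun f hf x => (hf x).trans h

/-- Grid point `k/m` (clamped at 1) of the unit interval. -/
def gptN (m k : ℕ) : I :=
  ⟨min ((k : ℝ) / m) 1, ⟨le_min (by positivity) zero_le_one, min_le_right _ _⟩⟩

lemma gptN_coe {m k : ℕ} (hm : 1 ≤ m) (h : k ≤ m) : (gptN m k : ℝ) = (k : ℝ) / m := by
  simp only [gptN]
  exact min_eq_left (by
    rw [div_le_one (by exact_mod_cast hm)]
    exact_mod_cast h)

lemma gptN_mono (m : ℕ) : Monotone (gptN m) := by
  intro k l hkl
  rcases Nat.eq_zero_or_pos m with hm | hm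
  · subst hm; simp [gptN, Subtype.mk_le_mk]
  · exact Subtype.mk_le_mk.2 (min_le_min (by
      apply div_le_div_of_nonneg_right (by exact_mod_cast hkl) (Nat.cast_nonneg m)) le_rfl)

lemma monotone_grid_bound {f : C(I, ℝ)} (hf : Monotone f) {m : ℕ} (hm : 1 ≤ m) {a : ℝ}
    (ha : ∀ k : ℕ, k < m → f (gptN m (k + 1)) - f (gptN m k) ≤ a)
    {x y : I} (hxy : x ≤ y) (hd : (y : ℝ) - x ≤ 1 / m) : f y - f x ≤ 2 * a := by
  have hm0 : (0 : ℝ) < m := by exact_mod_cast hm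
  have ha0 : 0 ≤ a := by
    have h01 : gptN m 0 ≤ gptN m 1 := gptN_mono m (by omega)
    have := hf h01
    have := ha 0 hm
    linarith
  set j := ⌊(x : ℝ) * m⌋₊ with hj
  by_cases hc : m ≤ j
  · -- then x = 1, so y = x
    have hxm : (m : ℝ) ≤ (x : ℝ) * m := by
      have := Nat.le_floor_iff (mul_nonneg x.2.1 hm0.le) |>.1
        (le_refl j) -- j ≤ x*m
      calc (m : ℝ) ≤ (j : ℝ) := by exact_mod_cast hc
        _ ≤ (x : ℝ) * m := this
    have hx1 : (1 : ℝ) ≤ (x : ℝ) := by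
      nlinarith
    have hxe : (x : ℝ) = 1 := le_antisymm x.2.2 hx1
    have hye : (y : ℝ) = 1 := le_antisymm y.2.2 (hxe ▸ hxy)
    have : x = y := Subtype.ext (by rw [hxe, hye])
    rw [this]
    linarith
  · push_neg at hc
    have key1 : (j : ℝ) / m ≤ (x : ℝ) := by
      rw [div_le_iff₀ hm0]
      exact Nat.floor_le (mul_nonneg x.2.1 hm0.le)
    have key2 : (x : ℝ) ≤ ((j : ℝ) + 1) / m := by
      rw [le_div_iff₀ hm0]
      exact (Nat.lt_floor_add_one _).le
    have hgx : gptN m j ≤ x := by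
      refine Subtype.mk_le_mk.2 ?_
      exact (min_le_left _ _).trans key1
    set k0 := min (j + 2) m with hk0
    have hyg : y ≤ gptN m k0 := by
      refine Subtype.mk_le_mk.2 (le_min ?_ y.2.2)
      rcases le_or_gt (j + 2) m with h2 | h2
      · have : k0 = j + 2 := min_eq_left h2
        rw [this]
        push_cast
        rw [le_div_iff₀ hm0]
        have : (y : ℝ) ≤ (x : ℝ) + 1 / m := by linarith
        calc (y : ℝ) * m ≤ ((x : ℝ) + 1 / m) * m := by nlinarith
          _ ≤ (((j : ℝ) + 1) / m + 1 / m) * m :=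
            mul_le_mul_of_nonneg_right (by linarith) hm0.le
          _ = (j : ℝ) + 1 + 1 := by field_simp
          _ = (j : ℝ) + 2 := by ring
      · have : k0 = m := min_eq_right h2.le
        rw [this, div_self (ne_of_gt hm0)]
        exact y.2.2
    have step : f (gptN m k0) - f (gptN m j) ≤ 2 * a := by
      rcases le_or_gt (j + 2) m with h2 | h2
      · have hk2 : k0 = j + 2 := min_eq_left h2
        have i1 := ha j hc
        have i2 := ha (j + 1) (by omega)
        rw [hk2]
        have : j + 1 + 1 = j + 2 := by ring
        rw [this] at i2
        linarith
      · have hjm : j + 1 = m := by omega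
        have hk2 : k0 = m := min_eq_right h2.le
        have i1 := ha j hc
        rw [hjm] at i1
        rw [hk2]
        linarith
    have l1 := hf hgx
    have l2 := hf hyg
    linarith

lemma monotone_mem_modSet {f : C(I, ℝ)} (hf : Monotone f) {m : ℕ} (hm : 1 ≤ m) {a : ℝ}
    (ha : ∀ k : ℕ, k < m → f (gptN m (k + 1)) - f (gptN m k) ≤ a) :
    f ∈ modSet (1 / m) (2 * a) := by
  intro x y hxy
  rcases le_total x y with h | h
  · have h2 : (y : ℝ) - x ≤ 1 / m := by
      have : dist x y = |(x : ℝ) - y| := Subtype.dist_eq x y ▸ Real.dist_eq _ _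
      rw [this] at hxy
      have := abs_le.1 hxy
      linarith [this.1]
    have := monotone_grid_bound hf hm ha h h2
    have hfxy : f x ≤ f y := hf h
    rw [abs_sub_le_iff]
    constructor <;> linarith
  · have h2 : (x : ℝ) - y ≤ 1 / m := by
      have : dist x y = |(x : ℝ) - y| := Subtype.dist_eq x y ▸ Real.dist_eq _ _
      rw [this] at hxy
      have := abs_le.1 hxy
      linarith [this.2]
    have := monotone_grid_bound hf hm ha h h2
    have hfxy : f y ≤ f x := hf h
    rw [abs_sub_le_iff]
    constructor <;> linarith

lemma monotone_abs_le {f : C(I, ℝ)} (hf : Monotone f) (x : I) :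
    |f x| ≤ max |f (gptN 1 0)| |f (gptN 1 1)| := by
  have h0 : gptN 1 0 ≤ x := by
    refine Subtype.mk_le_mk.2 ?_
    simpa [gptN] using x.2.1
  have h1 : x ≤ gptN 1 1 := by
    refine Subtype.mk_le_mk.2 ?_
    simpa [gptN] using x.2.2
  have l0 := hf h0
  have l1 := hf h1
  have n0 := neg_abs_le (f (gptN 1 0))
  have n1 := le_abs_self (f (gptN 1 1))
  rw [abs_le]
  constructor
  · have := le_max_left |f (gptN 1 0)| |f (gptN 1 1)|
    linarith
  · have := le_max_right |f (gptN 1 0)| |f (gptN 1 1)|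
    linarith

/-- The basic compact set: bounded functions with prescribed moduli of continuity. -/
lemma isCompact_inter_modSet (M : ℝ) (δ : ℕ → ℝ) (hδ : ∀ j, 0 < δ j) :
    IsCompact (normSet M ∩ ⋂ j : ℕ, modSet (δ j) (1 / ((j : ℝ) + 1))) := by
  set S := normSet M ∩ ⋂ j : ℕ, modSet (δ j) (1 / ((j : ℝ) + 1)) with hS
  set S' : Set (I → ℝ) := {u | (∀ x, u x ∈ Icc (-M) M) ∧
      ∀ j : ℕ, ∀ x y : I, dist x y ≤ δ j → |u x - u y| ≤ 1 / ((j : ℝ) + 1)} with hS'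
  have hmem : ∀ f : C(I, ℝ), f ∈ S ↔ (⇑f ∈ S') := by
    intro f
    constructor
    · rintro ⟨h1, h2⟩
      rw [Set.mem_iInter] at h2
      exact ⟨fun x => Set.mem_Icc.2 (abs_le.1 (h1 x)), fun j x y h => h2 j x y h⟩
    · rintro ⟨h1, h2⟩
      exact ⟨fun x => abs_le.2 (Set.mem_Icc.1 (h1 x)),
        Set.mem_iInter.2 fun j x y h => h2 j x y h⟩
  apply ArzelaAscoli.isCompact_of_equicontinuous
  · have himg : ContinuousMap.toFun '' S = S' := by
      apply Set.Subset.antisymm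
      · rintro u ⟨f, hf, rfl⟩
        exact (hmem f).1 hf
      · intro u hu
        have hcont : Continuous u := by
          rw [Metric.continuous_iff]
          intro x ε hε
          obtain ⟨j, hj⟩ := exists_nat_one_div_lt hε
          refine ⟨δ j, hδ j, fun y hy => ?_⟩
          rw [Real.dist_eq]
          calc |u y - u x| ≤ 1 / ((j : ℝ) + 1) :=
                hu.2 j y x hy.le
            _ < ε := hj
        exact ⟨⟨u, hcont⟩, (hmem ⟨u, hcont⟩).2 hu, rfl⟩
    rw [himg]
    have hclosed : IsClosed S' := by
      have : S' = (⋂ x : I, (fun u : I → ℝ => u x) ⁻¹' Icc (-M) M) ∩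
          ⋂ (j : ℕ) (x : I) (y : I) (_ : dist x y ≤ δ j),
            {u : I → ℝ | |u x - u y| ≤ 1 / ((j : ℝ) + 1)} := by
        ext u
        simp only [hS', Set.mem_setOf_eq, Set.mem_inter_iff, Set.mem_iInter, Set.mem_preimage]
      rw [this]
      refine IsClosed.inter (isClosed_iInter fun x => IsClosed.preimage (continuous_apply x)
        isClosed_Icc) ?_
      refine isClosed_iInter fun j => isClosed_iInter fun x => isClosed_iInter fun y =>
        isClosed_iInter fun _ => ?_
      exact isClosed_le (((continuous_apply x).sub (continuous_apply y)).abs) continuous_const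
    have hsub : S' ⊆ Set.pi Set.univ (fun _ : I => Icc (-M) M) := by
      intro u hu x _
      exact hu.1 x
    exact IsCompact.of_isClosed_subset (isCompact_univ_pi fun _ => isCompact_Icc) hclosed hsub
  · intro x
    rw [Metric.equicontinuousAt_iff]
    intro ε hε
    obtain ⟨j, hj⟩ := exists_nat_one_div_lt hε
    refine ⟨δ j, hδ j, fun y hy f => ?_⟩
    have hf : (f : C(I, ℝ)) ∈ S := f.2
    have h2 := ((hmem f).1 hf).2 j x y (by rw [dist_comm] at hy; exact hy.le)
    rw [Real.dist_eq]
    calc |(f : C(I,ℝ)) x - (f : C(I,ℝ)) y| ≤ 1 / ((j : ℝ) + 1) := h2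
      _ < ε := hj

section Measures

variable [MeasurableSpace C(I, ℝ)] [BorelSpace C(I, ℝ)]

lemma exists_modSet_nat (μ : Measure C(I, ℝ)) [IsProbabilityMeasure μ] {c : ℝ} (hc : 0 < c)
    {e : ℝ≥0∞} (he : 0 < e) :
    ∃ m : ℕ, 1 ≤ m ∧ μ (modSet (1 / (m : ℝ)) c)ᶜ ≤ e := by
  set A : ℕ → Set C(I, ℝ) := fun m => (modSet (1 / ((m : ℝ) + 1)) c)ᶜ with hA
  have hanti : Antitone A := by
    intro m m' hmm
    apply Set.compl_subset_compl.2
    apply modSet_mono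
    apply one_div_le_one_div_of_le (by positivity)
    exact_mod_cast Nat.add_le_add_right hmm 1
  have hempty : (⋂ m, A m) = ∅ := by
    rw [Set.eq_empty_iff_forall_notMem]
    intro f hf
    rw [Set.mem_iInter] at hf
    have huc : UniformContinuous ⇑f := CompactSpace.uniformContinuous_of_continuous f.continuous
    rw [Metric.uniformContinuous_iff] at huc
    obtain ⟨d, hd, hduc⟩ := huc c hc
    obtain ⟨m, hm⟩ := exists_nat_one_div_lt hd
    apply hf m
    intro x y hxy
    rw [← Real.dist_eq]
    exact (hduc (lt_of_le_of_lt hxy hm)).le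
  have hmeas : ∀ m, NullMeasurableSet (A m) μ :=
    fun m => ((isClosed_modSet _ _).measurableSet.compl).nullMeasurableSet
  have htend := tendsto_measure_iInter_atTop hmeas hanti ⟨0, measure_ne_top μ _⟩
  rw [hempty] at htend
  simp only [measure_empty] at htend
  have hev : ∀ᶠ m in atTop, μ (A m) < e := htend.eventually_lt_const he
  obtain ⟨m, hm⟩ := hev.exists
  refine ⟨m + 1, by omega, ?_⟩
  have hcast : ((m + 1 : ℕ) : ℝ) = (m : ℝ) + 1 := by push_cast; ring
  rw [hcast]
  exact hm.le

lemma exists_normSet_nat (μ : Measure C(I, ℝ)) [IsProbabilityMeasure μ]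
    {e : ℝ≥0∞} (he : 0 < e) :
    ∃ M : ℕ, μ (normSet (M : ℝ))ᶜ ≤ e := by
  set A : ℕ → Set C(I, ℝ) := fun M => (normSet (M : ℝ))ᶜ with hA
  have hanti : Antitone A := by
    intro m m' hmm
    exact Set.compl_subset_compl.2 (normSet_mono (by exact_mod_cast hmm))
  have hempty : (⋂ m, A m) = ∅ := by
    rw [Set.eq_empty_iff_forall_notMem]
    intro f hf
    rw [Set.mem_iInter] at hf
    apply hf ⌈‖f‖⌉₊
    intro x
    calc |f x| = ‖f x‖ := rfl
      _ ≤ ‖f‖ := ContinuousMap.norm_coe_le_norm f x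
      _ ≤ (⌈‖f‖⌉₊ : ℝ) := Nat.le_ceil _
  have hmeas : ∀ m, NullMeasurableSet (A m) μ :=
    fun m => ((isClosed_normSet _).measurableSet.compl).nullMeasurableSet
  have htend := tendsto_measure_iInter_atTop hmeas hanti ⟨0, measure_ne_top μ _⟩
  rw [hempty] at htend
  simp only [measure_empty] at htend
  obtain ⟨m, hm⟩ := (htend.eventually_lt_const he).exists
  exact ⟨m, hm.le⟩

lemma tight_of_bounds {ι : Type*} (μ : ι → Measure C(I, ℝ)) [∀ i, IsProbabilityMeasure (μ i)]
    (hnorm : ∀ e : ℝ≥0∞, 0 < e → ∃ M : ℝ, ∀ i, μ i (normSet M)ᶜ ≤ e)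
    (hmod : ∀ c : ℝ, 0 < c → ∀ e : ℝ≥0∞, 0 < e → ∃ δ : ℝ, 0 < δ ∧ ∀ i, μ i (modSet δ c)ᶜ ≤ e)
    (ε : ℝ≥0∞) (hε : 0 < ε) :
    ∃ K : Set C(I, ℝ), IsCompact K ∧ IsClosed K ∧ ∀ i, μ i Kᶜ ≤ ε := by
  have h4 : (0 : ℝ≥0∞) < ε / 4 := ENNReal.div_pos hε.ne' (by norm_num)
  obtain ⟨M, hM⟩ := hnorm (ε / 4) h4
  have hpos : ∀ j : ℕ, (0 : ℝ≥0∞) < ε / 2 ^ (j + 2) := fun j =>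
    ENNReal.div_pos hε.ne' (by simp)
  have hcpos : ∀ j : ℕ, (0 : ℝ) < 1 / ((j : ℝ) + 1) := fun j => by positivity
  choose δ hδ hδle using fun j : ℕ => hmod _ (hcpos j) _ (hpos j)
  refine ⟨normSet M ∩ ⋂ j : ℕ, modSet (δ j) (1 / ((j : ℝ) + 1)),
    isCompact_inter_modSet M δ hδ, ?_, ?_⟩
  · exact (isClosed_normSet M).inter (isClosed_iInter fun j => isClosed_modSet _ _)
  · intro i
    rw [Set.compl_inter, Set.compl_iInter]
    calc μ i ((normSet M)ᶜ ∪ ⋃ j : ℕ, (modSet (δ j) (1 / ((j : ℝ) + 1)))ᶜ)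
        ≤ μ i (normSet M)ᶜ + μ i (⋃ j : ℕ, (modSet (δ j) (1 / ((j : ℝ) + 1)))ᶜ) :=
          measure_union_le _ _
      _ ≤ ε / 4 + ∑' j : ℕ, μ i (modSet (δ j) (1 / ((j : ℝ) + 1)))ᶜ := by
          gcongr
          · exact hM i
          · exact measure_iUnion_le _
      _ ≤ ε / 4 + ∑' j : ℕ, ε / 2 ^ (j + 2) := by
          gcongr with j
          exact hδle j i
      _ ≤ ε := by
          have hsum : ∑' j : ℕ, ε / 2 ^ (j + 2) = ε * 2⁻¹ := by
            calc ∑' j : ℕ, ε / 2 ^ (j + 2)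
                = ∑' j : ℕ, ε * 2⁻¹ ^ 2 * 2⁻¹ ^ j := by
                  refine tsum_congr fun j => ?_
                  rw [div_eq_mul_inv, pow_add,
                    ENNReal.mul_inv (Or.inl (by norm_num)) (Or.inr (by norm_num))]
                  simp only [ENNReal.inv_pow]
                  ring
              _ = ε * 2⁻¹ ^ 2 * ∑' j : ℕ, 2⁻¹ ^ j := ENNReal.tsum_mul_left
              _ = ε * 2⁻¹ ^ 2 * 2 := by
                  rw [ENNReal.tsum_geometric, ENNReal.one_sub_inv_two, inv_inv]
              _ = ε * (2⁻¹ * (2⁻¹ * 2)) := by ring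
              _ = ε * 2⁻¹ := by
                  rw [ENNReal.inv_mul_cancel (by norm_num) (by norm_num), mul_one]
          rw [hsum]
          have h1 : ε / 4 ≤ ε * 2⁻¹ := by
            rw [div_eq_mul_inv]
            exact mul_le_mul_right (ENNReal.inv_le_inv.2 (by norm_num)) ε
          calc ε / 4 + ε * 2⁻¹ ≤ ε * 2⁻¹ + ε * 2⁻¹ := add_le_add_left h1 _
            _ = ε * (2⁻¹ + 2⁻¹) := by rw [mul_add]
            _ = ε * 1 := by rw [ENNReal.inv_two_add_inv_two]
            _ = ε := mul_one ε

end Measures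

/-- Uniform equicontinuity of a compact set of continuous functions on `I`. -/
lemma compact_uniform_equicontinuous {K : Set C(I, ℝ)} (hK : IsCompact K) {ε : ℝ} (hε : 0 < ε) :
    ∃ δ : ℝ, 0 < δ ∧ ∀ f ∈ K, ∀ x y : I, dist x y ≤ δ → |f x - f y| ≤ ε := by
  have htb := hK.totallyBounded
  rw [Metric.totallyBounded_iff] at htb
  obtain ⟨t, htfin, hcover⟩ := htb (ε / 3) (by positivity)
  have hd : ∀ g : C(I, ℝ), ∃ d : ℝ, 0 < d ∧ ∀ x y : I, dist x y ≤ d → |g x - g y| ≤ ε / 3 := by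
    intro g
    have huc : UniformContinuous ⇑g := CompactSpace.uniformContinuous_of_continuous g.continuous
    rw [Metric.uniformContinuous_iff] at huc
    obtain ⟨d, hdpos, hduc⟩ := huc (ε / 3) (by positivity)
    refine ⟨d / 2, by positivity, fun x y hxy => ?_⟩
    rw [← Real.dist_eq]
    exact (hduc (lt_of_le_of_lt hxy (by linarith))).le
  choose d hdpos hdprop using hd
  rcases t.eq_empty_or_nonempty with rfl | hne
  · refine ⟨1, one_pos, fun f hf => ?_⟩
    simpa using hcover hf
  · have hFne : htfin.toFinset.Nonempty := by
      rwa [Set.Finite.toFinset_nonempty]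
    refine ⟨htfin.toFinset.inf' hFne d, ?_, ?_⟩
    · rw [Finset.lt_inf'_iff]
      exact fun g _ => hdpos g
    · intro f hf x y hxy
      obtain ⟨g, hg, hfg⟩ := Set.mem_iUnion₂.1 (hcover hf)
      rw [Metric.mem_ball] at hfg
      have h1 : |f x - g x| ≤ ε / 3 := by
        rw [← Real.dist_eq]
        exact (ContinuousMap.dist_apply_le_dist x).trans hfg.le
      have h2 : |f y - g y| ≤ ε / 3 := by
        rw [← Real.dist_eq]
        exact (ContinuousMap.dist_apply_le_dist y).trans hfg.le
      have h3 : |g x - g y| ≤ ε / 3 := by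
        apply hdprop g x y
        exact hxy.trans (Finset.inf'_le d (by rwa [Set.Finite.mem_toFinset]))
      calc |f x - f y| = |(f x - g x) + (g x - g y) + (g y - f y)| := by ring_nf
        _ ≤ |f x - g x| + |g x - g y| + |g y - f y| := by
            exact (abs_add_le _ _).trans (by gcongr; exact abs_add_le _ _)
        _ ≤ ε / 3 + ε / 3 + ε / 3 := by
            rw [abs_sub_comm (g y) (f y)]
            gcongr
        _ = ε := by ring

/-- A continuous function is uniformly continuous in a neighbourhood of a compact set. -/
lemma uniform_near_compact {α : Type*} [MetricSpace α] {g : α → ℝ} (hg : Continuous g)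
    {K : Set α} (hK : IsCompact K) {ε : ℝ} (hε : 0 < ε) :
    ∃ δ : ℝ, 0 < δ ∧ ∀ f ∈ K, ∀ h : α, dist f h ≤ δ → |g f - g h| ≤ ε := by
  have hr : ∀ f : α, ∃ r : ℝ, 0 < r ∧ ∀ h : α, dist h f < 2 * r → |g h - g f| ≤ ε / 2 := by
    intro f
    rw [Metric.continuous_iff] at hg
    obtain ⟨d, hdpos, hdc⟩ := hg f (ε / 2) (by positivity)
    refine ⟨d / 2, by positivity, fun h hh => ?_⟩
    rw [← Real.dist_eq]
    exact (hdc h (by linarith)).le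
  choose r hrpos hrprop using hr
  have hcov : K ⊆ ⋃ f ∈ K, Metric.ball f (r f) :=
    fun f hf => Set.mem_biUnion hf (Metric.mem_ball_self (hrpos f))
  obtain ⟨t, hts, htfin, hcover⟩ :=
    hK.elim_finite_subcover_image (fun f _ => Metric.isOpen_ball) hcov
  rcases t.eq_empty_or_nonempty with rfl | hne
  · refine ⟨1, one_pos, fun f hf => ?_⟩
    simpa using hcover hf
  · have hFne : htfin.toFinset.Nonempty := by rwa [Set.Finite.toFinset_nonempty]
    refine ⟨htfin.toFinset.inf' hFne r, ?_, ?_⟩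
    · rw [Finset.lt_inf'_iff]
      exact fun f _ => hrpos f
    · intro f hf h hdist
      obtain ⟨f₀, hf₀, hff₀⟩ := Set.mem_iUnion₂.1 (hcover hf)
      rw [Metric.mem_ball] at hff₀
      have hδle : htfin.toFinset.inf' hFne r ≤ r f₀ :=
        Finset.inf'_le r (by rwa [Set.Finite.mem_toFinset])
      have h1 : |g f - g f₀| ≤ ε / 2 := hrprop f₀ f (by linarith [hrpos f₀])
      have h2 : |g h - g f₀| ≤ ε / 2 := by
        apply hrprop f₀ h
        calc dist h f₀ ≤ dist h f + dist f f₀ := dist_triangle _ _ _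
          _ < htfin.toFinset.inf' hFne r + r f₀ := by
              rw [dist_comm h f]
              exact add_lt_add_of_le_of_lt hdist hff₀
          _ ≤ 2 * r f₀ := by linarith
      calc |g f - g h| = |(g f - g f₀) - (g h - g f₀)| := by ring_nf
        _ ≤ |g f - g f₀| + |g h - g f₀| := abs_sub _ _
        _ ≤ ε := by linarith

/-! ### Piecewise-linear interpolation -/

/-- The tent function. -/
def hat (t : ℝ) : ℝ := max 0 (1 - |t|)

lemma hat_nonneg (t : ℝ) : 0 ≤ hat t := le_max_left _ _

lemma hat_continuous : Continuous hat :=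
  continuous_const.max (continuous_const.sub continuous_abs)

lemma hat_eq_zero {t : ℝ} (h : 1 ≤ |t|) : hat t = 0 := max_eq_left (by linarith)

/-- Piecewise linear interpolation through the values `v k` at the grid points `k/m`. -/
def interpFun (m : ℕ) (v : Fin (m + 1) → ℝ) : C(I, ℝ) :=
  ⟨fun x => ∑ k : Fin (m + 1), v k * hat ((m : ℝ) * (x : ℝ) - ((k : ℕ) : ℝ)), by
    apply continuous_finset_sum
    intro k _
    exact continuous_const.mul (hat_continuous.comp
      ((continuous_const.mul continuous_subtype_val).sub continuous_const))⟩

lemma nat_cast_abs_sub_ge {a b : ℕ} (h : a ≠ b) : (1 : ℝ) ≤ |(a : ℝ) - b| := by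
  rcases (by omega : a + 1 ≤ b ∨ b + 1 ≤ a) with h1 | h1
  · have h2 : (a : ℝ) + 1 ≤ b := by exact_mod_cast h1
    rw [abs_sub_comm, abs_of_nonneg (by linarith)]
    linarith
  · have h2 : (b : ℝ) + 1 ≤ a := by exact_mod_cast h1
    rw [abs_of_nonneg (by linarith)]
    linarith

lemma hat_partition {m : ℕ} (hm : 1 ≤ m) (x : I) :
    ∑ k : Fin (m + 1), hat ((m : ℝ) * (x : ℝ) - ((k : ℕ) : ℝ)) = 1 := by
  have hm0 : (0 : ℝ) < m := by exact_mod_cast hm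
  set s : ℝ := (m : ℝ) * x with hs
  have hs0 : 0 ≤ s := mul_nonneg hm0.le x.2.1
  have hs1 : s ≤ m := by
    calc s ≤ (m : ℝ) * 1 := mul_le_mul_of_nonneg_left x.2.2 hm0.le
      _ = m := mul_one _
  set j := ⌊s⌋₊ with hj
  have hjm : j ≤ m := by
    have := Nat.floor_mono hs1
    rwa [Nat.floor_natCast] at this
  have hjle : (j : ℝ) ≤ s := Nat.floor_le hs0
  have hjlt : s < (j : ℝ) + 1 := Nat.lt_floor_add_one s
  by_cases hcase : (j : ℝ) = s
  · rw [Finset.sum_eq_single (⟨j, by omega⟩ : Fin (m + 1))]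
    · simp [hat, ← hcase]
    · intro k _ hk
      apply hat_eq_zero
      have hkj : (k : ℕ) ≠ j := fun h => hk (by apply Fin.ext; simpa using h)
      rw [← hcase]
      have := nat_cast_abs_sub_ge hkj
      rwa [abs_sub_comm]
    · intro h; exact absurd (Finset.mem_univ _) h
  · have hjltm : j < m := by
      rcases eq_or_lt_of_le hjm with h | h
      · exfalso
        apply hcase
        have hms : (m : ℝ) ≤ s := by rw [h] at hjle; exact_mod_cast hjle
        have hsm : s = (m : ℝ) := le_antisymm hs1 hms
        rw [h, hsm]
      · exact h
    have hjs : (j : ℝ) < s := lt_of_le_of_ne hjle hcase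
    set a : Fin (m + 1) := ⟨j, by omega⟩ with ha
    set b : Fin (m + 1) := ⟨j + 1, by omega⟩ with hb
    have hab : a ≠ b := by
      simp only [ha, hb, Fin.mk.injEq, ne_eq]
      omega
    have hsum : ∑ k : Fin (m + 1), hat (s - ((k : ℕ) : ℝ))
        = ∑ k ∈ ({a, b} : Finset (Fin (m + 1))), hat (s - ((k : ℕ) : ℝ)) := by
      symm
      apply Finset.sum_subset (Finset.subset_univ _)
      intro k _ hk
      simp only [Finset.mem_insert, Finset.mem_singleton] at hk
      push_neg at hk
      obtain ⟨hk1, hk2⟩ := hk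
      have hk1' : (k : ℕ) ≠ j := fun h => hk1 (by apply Fin.ext; simpa [ha] using h)
      have hk2' : (k : ℕ) ≠ j + 1 := fun h => hk2 (by apply Fin.ext; simpa [hb] using h)
      apply hat_eq_zero
      rcases (by omega : (k : ℕ) + 1 ≤ j ∨ j + 2 ≤ (k : ℕ)) with h | h
      · have h2 : ((k : ℕ) : ℝ) + 1 ≤ j := by exact_mod_cast h
        rw [abs_of_nonneg (by linarith)]
        linarith
      · have h2 : (j : ℝ) + 2 ≤ ((k : ℕ) : ℝ) := by exact_mod_cast h
        rw [abs_of_nonpos (by linarith), neg_sub]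
        linarith
    rw [hsum, Finset.sum_pair hab]
    have hhata : hat (s - ((a : ℕ) : ℝ)) = 1 - (s - j) := by
      have hav : ((a : ℕ) : ℝ) = (j : ℝ) := by simp [ha]
      rw [hav]
      unfold hat
      rw [abs_of_nonneg (by linarith)]
      exact max_eq_right (by linarith)
    have hhatb : hat (s - ((b : ℕ) : ℝ)) = s - j := by
      have hbv : ((b : ℕ) : ℝ) = (j : ℝ) + 1 := by simp [hb]
      rw [hbv]
      unfold hat
      rw [abs_of_nonpos (by linarith), neg_sub]
      rw [max_eq_right (by linarith)]
      ring
    rw [hhata, hhatb]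
    ring

lemma interp_sub {m : ℕ} (hm : 1 ≤ m) (v : Fin (m + 1) → ℝ) (r : ℝ) (x : I) :
    interpFun m v x - r
      = ∑ k : Fin (m + 1), (v k - r) * hat ((m : ℝ) * (x : ℝ) - ((k : ℕ) : ℝ)) := by
  have hp := hat_partition hm x
  simp only [interpFun, ContinuousMap.coe_mk]
  calc (∑ k : Fin (m + 1), v k * hat ((m : ℝ) * (x : ℝ) - ((k : ℕ) : ℝ))) - r
      = (∑ k : Fin (m + 1), v k * hat ((m : ℝ) * (x : ℝ) - ((k : ℕ) : ℝ)))
        - r * ∑ k : Fin (m + 1), hat ((m : ℝ) * (x : ℝ) - ((k : ℕ) : ℝ)) := by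
        rw [hp, mul_one]
    _ = ∑ k : Fin (m + 1), (v k - r) * hat ((m : ℝ) * (x : ℝ) - ((k : ℕ) : ℝ)) := by
        rw [Finset.mul_sum, ← Finset.sum_sub_distrib]
        exact Finset.sum_congr rfl fun k _ => by ring

lemma interp_dist {m : ℕ} (hm : 1 ≤ m) (f : C(I, ℝ)) {c : ℝ} (hc : 0 ≤ c)
    (hf : ∀ x y : I, dist x y ≤ 1 / m → |f x - f y| ≤ c) :
    dist (interpFun m (fun k => f (gptN m (k : ℕ)))) f ≤ c := by
  have hm0 : (0 : ℝ) < m := by exact_mod_cast hm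
  rw [ContinuousMap.dist_le hc]
  intro x
  rw [Real.dist_eq, interp_sub hm _ (f x) x]
  calc |∑ k : Fin (m + 1), (f (gptN m (k : ℕ)) - f x) * hat ((m : ℝ) * (x : ℝ) - ((k : ℕ) : ℝ))|
      ≤ ∑ k : Fin (m + 1),
        |(f (gptN m (k : ℕ)) - f x) * hat ((m : ℝ) * (x : ℝ) - ((k : ℕ) : ℝ))| :=
        Finset.abs_sum_le_sum_abs _ _
    _ ≤ ∑ k : Fin (m + 1), c * hat ((m : ℝ) * (x : ℝ) - ((k : ℕ) : ℝ)) := by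
        apply Finset.sum_le_sum
        intro k _
        rw [abs_mul, abs_of_nonneg (hat_nonneg _)]
        by_cases hz : hat ((m : ℝ) * (x : ℝ) - ((k : ℕ) : ℝ)) = 0
        · rw [hz, mul_zero, mul_zero]
        · apply mul_le_mul_of_nonneg_right ?_ (hat_nonneg _)
          apply hf
          have hlt : |(m : ℝ) * (x : ℝ) - ((k : ℕ) : ℝ)| < 1 := by
            by_contra hge
            push_neg at hge
            exact hz (hat_eq_zero hge)
          have hk : (k : ℕ) ≤ m := Nat.lt_succ_iff.1 k.2
          rw [Subtype.dist_eq, Real.dist_eq, gptN_coe hm hk]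
          have heq : ((k : ℕ) : ℝ) / m - (x : ℝ)
              = -(((m : ℝ) * (x : ℝ) - ((k : ℕ) : ℝ)) / m) := by
            field_simp; ring
          rw [heq, abs_neg, abs_div, abs_of_nonneg hm0.le]
          exact div_le_div_of_nonneg_right hlt.le (Nat.cast_nonneg m)
    _ = c := by rw [← Finset.mul_sum, hat_partition hm x, mul_one]

lemma interp_lipschitz {m : ℕ} (hm : 1 ≤ m) (v w : Fin (m + 1) → ℝ) :
    dist (interpFun m v) (interpFun m w) ≤ dist v w := by
  rw [ContinuousMap.dist_le dist_nonneg]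
  intro x
  rw [Real.dist_eq]
  have heq : interpFun m v x - interpFun m w x
      = ∑ k : Fin (m + 1), (v k - w k) * hat ((m : ℝ) * (x : ℝ) - ((k : ℕ) : ℝ)) := by
    simp only [interpFun, ContinuousMap.coe_mk, ← Finset.sum_sub_distrib]
    exact Finset.sum_congr rfl fun k _ => by ring
  rw [heq]
  calc |∑ k : Fin (m + 1), (v k - w k) * hat ((m : ℝ) * (x : ℝ) - ((k : ℕ) : ℝ))|
      ≤ ∑ k : Fin (m + 1), |(v k - w k) * hat ((m : ℝ) * (x : ℝ) - ((k : ℕ) : ℝ))| :=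
        Finset.abs_sum_le_sum_abs _ _
    _ ≤ ∑ k : Fin (m + 1), dist v w * hat ((m : ℝ) * (x : ℝ) - ((k : ℕ) : ℝ)) := by
        apply Finset.sum_le_sum
        intro k _
        rw [abs_mul, abs_of_nonneg (hat_nonneg _)]
        apply mul_le_mul_of_nonneg_right ?_ (hat_nonneg _)
        rw [← Real.dist_eq]
        exact dist_le_pi_dist v w k
    _ = dist v w := by rw [← Finset.mul_sum, hat_partition hm x, mul_one]

lemma interp_continuous {m : ℕ} (hm : 1 ≤ m) : Continuous (interpFun m) := by
  have : LipschitzWith 1 (interpFun m) := by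
    apply LipschitzWith.of_dist_le_mul
    intro v w
    rw [NNReal.coe_one, one_mul]
    exact interp_lipschitz hm v w
  exact this.continuous

section Integrals

variable [MeasurableSpace C(I, ℝ)] [BorelSpace C(I, ℝ)]

lemma integral_interp_close {Ωx : Type*} [MeasureSpace Ωx]
    [IsProbabilityMeasure (ℙ : Measure Ωx)]
    (R : Ωx → C(I, ℝ)) (hR : Measurable R) (g : C(I, ℝ) →ᵇ ℝ)
    {K : Set C(I, ℝ)} (hKc : IsClosed K) {m : ℕ} (hm : 1 ≤ m) {ε₁ : ℝ} (hε₁ : 0 ≤ ε₁)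
    (hint : ∀ f ∈ K, |g f - g (interpFun m (fun k => f (gptN m (k : ℕ))))| ≤ ε₁) :
    |(∫ ω, g (R ω)) - ∫ ω, g (interpFun m (fun k => R ω (gptN m (k : ℕ))))|
      ≤ ε₁ + 2 * ‖g‖ * ((ℙ : Measure Ωx) (R ⁻¹' Kᶜ)).toReal := by
  set L : Ωx → C(I, ℝ) := fun ω => interpFun m (fun k => R ω (gptN m (k : ℕ))) with hL
  have hLmeas : Measurable L := by
    apply (interp_continuous hm).measurable.comp
    exact measurable_pi_lambda _ fun k =>
      ((continuous_eval_const (gptN m (k : ℕ))).measurable).comp hR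
  have hgR : Measurable fun ω => g (R ω) := g.continuous.measurable.comp hR
  have hgL : Measurable fun ω => g (L ω) := g.continuous.measurable.comp hLmeas
  have hbound : ∀ f : C(I, ℝ), |g f| ≤ ‖g‖ := fun f => g.norm_coe_le_norm f
  have hintR : Integrable (fun ω => g (R ω)) (ℙ : Measure Ωx) := by
    refine (integrable_const ‖g‖).mono' hgR.aestronglyMeasurable ?_
    exact Filter.Eventually.of_forall fun ω => by simpa using hbound (R ω)
  have hintL : Integrable (fun ω => g (L ω)) (ℙ : Measure Ωx) := by
    refine (integrable_const ‖g‖).mono' hgL.aestronglyMeasurable ?_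
    exact Filter.Eventually.of_forall fun ω => by simpa using hbound (L ω)
  have hmeasset : MeasurableSet (R ⁻¹' Kᶜ) := hR hKc.measurableSet.compl
  have hint2 : Integrable (fun ω => ε₁ + (R ⁻¹' Kᶜ).indicator (fun _ => 2 * ‖g‖) ω)
      (ℙ : Measure Ωx) :=
    (integrable_const ε₁).add ((integrable_const (2 * ‖g‖)).indicator hmeasset)
  calc |(∫ ω, g (R ω)) - ∫ ω, g (L ω)|
      = |∫ ω, (g (R ω) - g (L ω))| := by rw [integral_sub hintR hintL]
    _ ≤ ∫ ω, |g (R ω) - g (L ω)| := by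
        simpa using norm_integral_le_integral_norm (fun ω => g (R ω) - g (L ω))
    _ ≤ ∫ ω, (ε₁ + (R ⁻¹' Kᶜ).indicator (fun _ => 2 * ‖g‖) ω) := by
        apply integral_mono (hintR.sub hintL).abs hint2
        intro ω
        show |g (R ω) - g (L ω)| ≤ ε₁ + (R ⁻¹' Kᶜ).indicator (fun _ => 2 * ‖g‖) ω
        by_cases hωK : R ω ∈ K
        · have h1 := hint (R ω) hωK
          have h2 : (R ⁻¹' Kᶜ).indicator (fun _ => 2 * ‖g‖) ω = 0 := by
            apply Set.indicator_of_notMem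
            simpa using hωK
          simp only [h2, add_zero]
          exact h1
        · have h2 : (R ⁻¹' Kᶜ).indicator (fun _ => 2 * ‖g‖) ω = 2 * ‖g‖ := by
            apply Set.indicator_of_mem
            simpa using hωK
          rw [h2]
          have := hbound (R ω)
          have := hbound (L ω)
          have habs : |g (R ω) - g (L ω)| ≤ |g (R ω)| + |g (L ω)| := abs_sub _ _
          linarith
    _ = ε₁ + 2 * ‖g‖ * ((ℙ : Measure Ωx) (R ⁻¹' Kᶜ)).toReal := by
        rw [integral_add (integrable_const ε₁)
          ((integrable_const (2 * ‖g‖)).indicator hmeasset)]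
        rw [integral_const, integral_indicator_const _ hmeasset]
        simp [measure_univ, smul_eq_mul, mul_comm, measureReal_def]

end Integrals

end

end BillMono


open BillMono

/-- **Lemma 5 (ii) of the paper.**  Let `(X n)` be a sequence of random elements of
`C([0,1], ℝ)` which are almost surely monotone (nondecreasing) functions on `[0,1]`.  If
the finite-dimensional distributions of `X n` converge to those of a random element `Y` of
`C([0,1], ℝ)` (i.e. for every `k` and every nondecreasing tuple `t : Fin k → [0,1]`, the
vector `(X n (t 1), …, X n (t k))` converges in distribution to `(Y (t 1), …, Y (t k))` in
`ℝ^k`), then the family of laws of `(X n)` is tight in `C([0,1], ℝ)` and consequently `X n`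
converges in distribution to `Y` in `C([0,1], ℝ)` with the uniform topology.  Convergence
in distribution is expressed by convergence of the integrals of every bounded continuous
test function. -/
theorem monotone_fdd_convergence_implies_tight_and_weak_convergence
    [MeasurableSpace C(unitInterval, ℝ)] [BorelSpace C(unitInterval, ℝ)]
    (Ω : ℕ → Type*) [∀ n, MeasureSpace (Ω n)]
    [∀ n, IsProbabilityMeasure (ℙ : Measure (Ω n))]
    {Ω' : Type*} [MeasureSpace Ω'] [IsProbabilityMeasure (ℙ : Measure Ω')]
    (X : ∀ n, Ω n → C(unitInterval, ℝ)) (hXmeas : ∀ n, Measurable (X n))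
    (hmono : ∀ n, ∀ᵐ ω ∂(ℙ : Measure (Ω n)), Monotone (X n ω))
    (Y : Ω' → C(unitInterval, ℝ)) (hYmeas : Measurable Y)
    (hfdd : ∀ (k : ℕ) (t : Fin k → unitInterval), Monotone t →
      ∀ f : (Fin k → ℝ) →ᵇ ℝ,
        Tendsto (fun n => ∫ ω, f (fun i => X n ω (t i)) ∂ℙ) atTop
          (𝓝 (∫ ω, f (fun i => Y ω (t i)) ∂ℙ))) :
    IsTightFamily (fun n => Measure.map (X n) ℙ) ∧
      ∀ g : C(unitInterval, ℝ) →ᵇ ℝ,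
        Tendsto (fun n => ∫ ω, g (X n ω) ∂ℙ) atTop (𝓝 (∫ ω, g (Y ω) ∂ℙ)) := by
  classical
  haveI hmapX : ∀ n, IsProbabilityMeasure (Measure.map (X n) (ℙ : Measure (Ω n))) :=
    fun n => Measure.isProbabilityMeasure_map (hXmeas n).aemeasurable
  haveI hmapY : IsProbabilityMeasure (Measure.map Y (ℙ : Measure Ω')) :=
    Measure.isProbabilityMeasure_map hYmeas.aemeasurable
  -- measurability of finite-dimensional vectors
  have hXv : ∀ (k : ℕ) (t : Fin k → I) (n : ℕ),
      Measurable fun ω => (fun i => X n ω (t i)) := fun k t n =>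
    measurable_pi_lambda _ fun i =>
      ((continuous_eval_const (t i)).measurable).comp (hXmeas n)
  have hYv : ∀ (k : ℕ) (t : Fin k → I),
      Measurable fun ω => (fun i => Y ω (t i)) := fun k t =>
    measurable_pi_lambda _ fun i =>
      ((continuous_eval_const (t i)).measurable).comp hYmeas
  -- the portmanteau consequence of fdd convergence
  have key : ∀ (k : ℕ) (t : Fin k → I), Monotone t → ∀ F : Set (Fin k → ℝ), IsClosed F →
      ∀ e : ℝ≥0∞, (ℙ : Measure Ω') ((fun ω => fun i => Y ω (t i)) ⁻¹' F) < e →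
      ∃ N : ℕ, ∀ n ≥ N, (ℙ : Measure (Ω n)) ((fun ω => fun i => X n ω (t i)) ⁻¹' F) < e := by
    intro k t ht F hF e he
    haveI hνni : ∀ n, IsProbabilityMeasure
        ((ℙ : Measure (Ω n)).map (fun ω => fun i => X n ω (t i))) :=
      fun n => Measure.isProbabilityMeasure_map (hXv k t n).aemeasurable
    haveI hνi : IsProbabilityMeasure
        ((ℙ : Measure Ω').map (fun ω => fun i => Y ω (t i))) :=
      Measure.isProbabilityMeasure_map (hYv k t).aemeasurable
    set νn : ℕ → ProbabilityMeasure (Fin k → ℝ) := fun n =>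
      ⟨(ℙ : Measure (Ω n)).map (fun ω => fun i => X n ω (t i)), hνni n⟩ with hνn
    set ν : ProbabilityMeasure (Fin k → ℝ) :=
      ⟨(ℙ : Measure Ω').map (fun ω => fun i => Y ω (t i)), hνi⟩ with hν
    have htend : Tendsto νn atTop (𝓝 ν) := by
      rw [MeasureTheory.ProbabilityMeasure.tendsto_iff_forall_integral_tendsto]
      intro f
      have h1 : ∀ n, ∫ v, f v ∂(νn n : Measure (Fin k → ℝ))
          = ∫ ω, f (fun i => X n ω (t i)) ∂(ℙ : Measure (Ω n)) := fun n =>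
        integral_map (hXv k t n).aemeasurable f.continuous.aestronglyMeasurable
      have h2 : ∫ v, f v ∂(ν : Measure (Fin k → ℝ))
          = ∫ ω, f (fun i => Y ω (t i)) ∂(ℙ : Measure Ω') :=
        integral_map (hYv k t).aemeasurable f.continuous.aestronglyMeasurable
      simp only [h1, h2]
      exact hfdd k t ht f
    have hlim := MeasureTheory.ProbabilityMeasure.limsup_measure_closed_le_of_tendsto htend hF
    have hmapeq : (ν : Measure (Fin k → ℝ)) F
        = (ℙ : Measure Ω') ((fun ω => fun i => Y ω (t i)) ⁻¹' F) :=
      Measure.map_apply (hYv k t) hF.measurableSet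
    have hlim2 : (atTop.limsup fun n => (νn n : Measure (Fin k → ℝ)) F) < e := by
      rw [hmapeq] at hlim
      exact lt_of_le_of_lt hlim he
    have hev : ∀ᶠ n in atTop, (νn n : Measure (Fin k → ℝ)) F < e :=
      Filter.eventually_lt_of_limsup_lt hlim2
    obtain ⟨N, hN⟩ := Filter.eventually_atTop.1 hev
    refine ⟨N, fun n hn => ?_⟩
    have := hN n hn
    rwa [show (νn n : Measure (Fin k → ℝ)) F
      = (ℙ : Measure (Ω n)) ((fun ω => fun i => X n ω (t i)) ⁻¹' F) from
      Measure.map_apply (hXv k t n) hF.measurableSet] at this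
  -- uniform norm bounds for the family
  have hXnorm : ∀ e : ℝ≥0∞, 0 < e →
      ∃ M : ℝ, ∀ n, (Measure.map (X n) (ℙ : Measure (Ω n))) (normSet M)ᶜ ≤ e := by
    intro e he
    set e' := min e 1 with he'
    have he'0 : 0 < e' := lt_min he zero_lt_one
    have he'top : e' ≠ ⊤ := (lt_of_le_of_lt (min_le_right _ _) ENNReal.one_lt_top).ne
    have he'le : e' ≤ e := min_le_left _ _
    have hhalf : e' / 2 < e' := ENNReal.half_lt_self he'0.ne' he'top
    have hhalf0 : 0 < e' / 2 := ENNReal.div_pos he'0.ne' (by norm_num)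
    obtain ⟨M₀, hM₀⟩ := exists_normSet_nat (Measure.map Y (ℙ : Measure Ω')) hhalf0
    set t : Fin 2 → I := fun i => gptN 1 (i : ℕ) with hgrid
    have ht : Monotone t := fun i j hij => gptN_mono 1 (Fin.le_def.1 hij)
    set F : Set (Fin 2 → ℝ) := {v | ((M₀ : ℝ) + 1) ≤ max |v 0| |v 1|} with hFdef
    have hFc : IsClosed F := isClosed_le continuous_const
      (Continuous.max (continuous_apply (0 : Fin 2)).abs (continuous_apply (1 : Fin 2)).abs)
    have hYF : (ℙ : Measure Ω') ((fun ω => fun i => Y ω (t i)) ⁻¹' F) < e' := by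
      refine lt_of_le_of_lt ?_ hhalf
      have hsub : (fun ω => fun i => Y ω (t i)) ⁻¹' F ⊆ Y ⁻¹' (normSet (M₀ : ℝ))ᶜ := by
        intro ω hω
        simp only [Set.mem_preimage, Set.mem_compl_iff]
        intro hns
        have h0 := hns (t 0)
        have h1 := hns (t 1)
        have hω' : ((M₀ : ℝ) + 1) ≤ max |Y ω (t 0)| |Y ω (t 1)| := hω
        have : max |Y ω (t 0)| |Y ω (t 1)| ≤ (M₀ : ℝ) := max_le h0 h1
        linarith
      calc (ℙ : Measure Ω') ((fun ω => fun i => Y ω (t i)) ⁻¹' F)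
          ≤ (ℙ : Measure Ω') (Y ⁻¹' (normSet (M₀ : ℝ))ᶜ) := measure_mono hsub
        _ = (Measure.map Y (ℙ : Measure Ω')) (normSet (M₀ : ℝ))ᶜ :=
            (Measure.map_apply hYmeas (isClosed_normSet _).measurableSet.compl).symm
        _ ≤ e' / 2 := hM₀
    obtain ⟨N, hN⟩ := key 2 t ht F hFc e' hYF
    have hind : ∀ n : ℕ, ∃ Mn : ℕ,
        (Measure.map (X n) (ℙ : Measure (Ω n))) (normSet (Mn : ℝ))ᶜ ≤ e' := fun n =>
      exists_normSet_nat _ he'0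
    choose d hd using hind
    set Mf : ℕ := max (M₀ + 1) ((Finset.range N).sup d) with hMf
    refine ⟨(Mf : ℝ), fun n => ?_⟩
    rcases lt_or_ge n N with hn | hn
    · have hdn : d n ≤ Mf := le_max_of_le_right (Finset.le_sup (Finset.mem_range.2 hn))
      have hsub : (normSet ((d n : ℕ) : ℝ))ᶜ ⊇ (normSet (Mf : ℝ))ᶜ :=
        Set.compl_subset_compl.2 (normSet_mono (by exact_mod_cast hdn))
      exact le_trans (le_trans (measure_mono hsub) (hd n)) he'le
    · have hFn := hN n hn
      rw [Measure.map_apply (hXmeas n) (isClosed_normSet _).measurableSet.compl]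
      have hsub : ∀ᵐ ω ∂(ℙ : Measure (Ω n)),
          ω ∈ X n ⁻¹' (normSet (Mf : ℝ))ᶜ →
          ω ∈ (fun ω => fun i => X n ω (t i)) ⁻¹' F := by
        filter_upwards [hmono n] with ω hmon hns
        simp only [Set.mem_preimage, Set.mem_compl_iff, normSet, Set.mem_setOf_eq] at hns
        push_neg at hns
        obtain ⟨x, hx⟩ := hns
        have habs := monotone_abs_le hmon x
        show ((M₀ : ℝ) + 1) ≤ max |X n ω (t 0)| |X n ω (t 1)|
        have hM1 : ((M₀ : ℝ) + 1) ≤ (Mf : ℝ) := by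
          have : M₀ + 1 ≤ Mf := le_max_left _ _
          exact_mod_cast this
        have ht0 : t 0 = gptN 1 0 := rfl
        have ht1 : t 1 = gptN 1 1 := rfl
        rw [ht0, ht1]
        linarith
      refine le_of_lt ?_
      calc (ℙ : Measure (Ω n)) (X n ⁻¹' (normSet (Mf : ℝ))ᶜ)
          ≤ (ℙ : Measure (Ω n)) ((fun ω => fun i => X n ω (t i)) ⁻¹' F) :=
            measure_mono_ae hsub
        _ < e' := hFn
        _ ≤ e := he'le
  -- uniform modulus-of-continuity bounds for the family
  have hXmod : ∀ c : ℝ, 0 < c → ∀ e : ℝ≥0∞, 0 < e →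
      ∃ δ : ℝ, 0 < δ ∧ ∀ n, (Measure.map (X n) (ℙ : Measure (Ω n))) (modSet δ c)ᶜ ≤ e := by
    intro c hc e he
    set e' := min e 1 with he'
    have he'0 : 0 < e' := lt_min he zero_lt_one
    have he'top : e' ≠ ⊤ := (lt_of_le_of_lt (min_le_right _ _) ENNReal.one_lt_top).ne
    have he'le : e' ≤ e := min_le_left _ _
    have hhalf : e' / 2 < e' := ENNReal.half_lt_self he'0.ne' he'top
    have hhalf0 : 0 < e' / 2 := ENNReal.div_pos he'0.ne' (by norm_num)
    obtain ⟨m₁, hm₁, hYmod⟩ :=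
      exists_modSet_nat (Measure.map Y (ℙ : Measure Ω')) (by positivity : (0:ℝ) < c/4) hhalf0
    have hm₁0 : (0 : ℝ) < m₁ := by exact_mod_cast hm₁
    set t : Fin (m₁ + 1) → I := fun i => gptN m₁ (i : ℕ) with hgrid
    have ht : Monotone t := fun i j hij => gptN_mono m₁ (Fin.le_def.1 hij)
    set F : Set (Fin (m₁ + 1) → ℝ) :=
      ⋃ k : Fin m₁, {v | c / 2 ≤ v k.succ - v k.castSucc} with hFdef
    have hFc : IsClosed F := by
      apply isClosed_iUnion_of_finite
      intro k
      exact isClosed_le continuous_const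
        ((continuous_apply (k.succ)).sub (continuous_apply (k.castSucc)))
    have hdistg : ∀ k : Fin m₁, dist (t k.succ) (t k.castSucc) ≤ 1 / (m₁ : ℝ) := by
      intro k
      have hk1 : (k : ℕ) + 1 ≤ m₁ := k.2
      have hk0 : (k : ℕ) ≤ m₁ := le_of_lt k.2
      have hv1 : (t k.succ : ℝ) = (((k : ℕ) + 1 : ℕ) : ℝ) / m₁ := by
        show (gptN m₁ ((k.succ : Fin (m₁+1)) : ℕ) : ℝ) = _
        rw [show ((k.succ : Fin (m₁+1)) : ℕ) = (k : ℕ) + 1 from rfl]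
        exact gptN_coe hm₁ hk1
      have hv0 : (t k.castSucc : ℝ) = ((k : ℕ) : ℝ) / m₁ := by
        show (gptN m₁ ((k.castSucc : Fin (m₁+1)) : ℕ) : ℝ) = _
        rw [show ((k.castSucc : Fin (m₁+1)) : ℕ) = (k : ℕ) from rfl]
        exact gptN_coe hm₁ hk0
      rw [Subtype.dist_eq, Real.dist_eq, hv1, hv0]
      have heq : (((k : ℕ) + 1 : ℕ) : ℝ) / m₁ - ((k : ℕ) : ℝ) / m₁ = 1 / m₁ := by
        push_cast
        field_simp; ring
      rw [heq, abs_of_nonneg (by positivity)]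
    have hYF : (ℙ : Measure Ω') ((fun ω => fun i => Y ω (t i)) ⁻¹' F) < e' := by
      refine lt_of_le_of_lt ?_ hhalf
      have hsub : (fun ω => fun i => Y ω (t i)) ⁻¹' F
          ⊆ Y ⁻¹' (modSet (1 / (m₁ : ℝ)) (c / 4))ᶜ := by
        intro ω hω
        simp only [Set.mem_preimage, Set.mem_compl_iff]
        intro hmem
        obtain ⟨k, hk⟩ := Set.mem_iUnion.1 hω
        have hk' : c / 2 ≤ Y ω (t k.succ) - Y ω (t k.castSucc) := hk
        have hb := hmem (t k.succ) (t k.castSucc) (hdistg k)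
        have := le_abs_self (Y ω (t k.succ) - Y ω (t k.castSucc))
        linarith
      calc (ℙ : Measure Ω') ((fun ω => fun i => Y ω (t i)) ⁻¹' F)
          ≤ (ℙ : Measure Ω') (Y ⁻¹' (modSet (1 / (m₁ : ℝ)) (c / 4))ᶜ) := measure_mono hsub
        _ = (Measure.map Y (ℙ : Measure Ω')) (modSet (1 / (m₁ : ℝ)) (c / 4))ᶜ :=
            (Measure.map_apply hYmeas (isClosed_modSet _ _).measurableSet.compl).symm
        _ ≤ e' / 2 := hYmod
    obtain ⟨N, hN⟩ := key (m₁ + 1) t ht F hFc e' hYF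
    have hind : ∀ n : ℕ, ∃ mn : ℕ, 1 ≤ mn ∧
        (Measure.map (X n) (ℙ : Measure (Ω n))) (modSet (1 / (mn : ℝ)) c)ᶜ ≤ e' := fun n =>
      exists_modSet_nat _ hc he'0
    choose d hd1 hd2 using hind
    set mf : ℕ := max m₁ ((Finset.range N).sup d) with hmf
    have hmf1 : 1 ≤ mf := le_trans hm₁ (le_max_left _ _)
    have hmf0 : (0 : ℝ) < mf := by exact_mod_cast hmf1
    refine ⟨1 / (mf : ℝ), by positivity, fun n => ?_⟩
    rcases lt_or_ge n N with hn | hn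
    · have hdn : d n ≤ mf := le_max_of_le_right (Finset.le_sup (Finset.mem_range.2 hn))
      have hdn0 : (0:ℝ) < d n := by exact_mod_cast hd1 n
      have hsub : (modSet (1 / ((d n : ℕ) : ℝ)) c)ᶜ ⊇ (modSet (1 / (mf : ℝ)) c)ᶜ := by
        apply Set.compl_subset_compl.2
        apply modSet_mono
        apply one_div_le_one_div_of_le hdn0
        exact_mod_cast hdn
      exact le_trans (le_trans (measure_mono hsub) (hd2 n)) he'le
    · have hFn := hN n hn
      rw [Measure.map_apply (hXmeas n) (isClosed_modSet _ _).measurableSet.compl]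
      have hsub : ∀ᵐ ω ∂(ℙ : Measure (Ω n)),
          ω ∈ X n ⁻¹' (modSet (1 / (mf : ℝ)) c)ᶜ →
          ω ∈ (fun ω => fun i => X n ω (t i)) ⁻¹' F := by
        filter_upwards [hmono n] with ω hmon hns
        simp only [Set.mem_preimage, Set.mem_compl_iff] at hns
        show (fun i => X n ω (t i)) ∈ F
        by_contra hF
        apply hns
        have ha : ∀ k : ℕ, k < m₁ →
            X n ω (gptN m₁ (k + 1)) - X n ω (gptN m₁ k) ≤ c / 2 := by
          intro k hk
          by_contra hgt
          push_neg at hgt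
          apply hF
          refine Set.mem_iUnion.2 ⟨⟨k, hk⟩, ?_⟩
          show c / 2 ≤ (fun i => X n ω (t i)) (Fin.succ ⟨k, hk⟩)
            - (fun i => X n ω (t i)) (Fin.castSucc ⟨k, hk⟩)
        -- reduce the Fin indices to ℕ
          have h1 : t (Fin.succ ⟨k, hk⟩) = gptN m₁ (k + 1) := rfl
          have h2 : t (Fin.castSucc ⟨k, hk⟩) = gptN m₁ k := rfl
          simp only [h1, h2]
          exact hgt.le
        have hmem := monotone_mem_modSet hmon hm₁ ha
        rw [show 2 * (c / 2) = c by ring] at hmem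
        exact modSet_mono (by
          apply one_div_le_one_div_of_le hm₁0
          exact_mod_cast le_max_left m₁ ((Finset.range N).sup d)) hmem
      refine le_of_lt ?_
      calc (ℙ : Measure (Ω n)) (X n ⁻¹' (modSet (1 / (mf : ℝ)) c)ᶜ)
          ≤ (ℙ : Measure (Ω n)) ((fun ω => fun i => X n ω (t i)) ⁻¹' F) :=
            measure_mono_ae hsub
        _ < e' := hFn
        _ ≤ e := he'le
  -- tightness of the family of laws
  have htightX : ∀ ε : ℝ≥0∞, 0 < ε → ∃ K : Set C(I, ℝ), IsCompact K ∧ IsClosed K ∧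
      ∀ n, (Measure.map (X n) (ℙ : Measure (Ω n))) Kᶜ ≤ ε :=
    fun ε hε => tight_of_bounds (fun n => Measure.map (X n) (ℙ : Measure (Ω n)))
      hXnorm hXmod ε hε
  constructor
  · intro ε hε
    obtain ⟨K, hKcomp, hKclosed, hKle⟩ := htightX ε hε
    refine ⟨K, hKcomp, fun n => ?_⟩
    rw [tsub_le_iff_right]
    have huniv : Measure.map (X n) (ℙ : Measure (Ω n)) K
        + Measure.map (X n) (ℙ : Measure (Ω n)) Kᶜ = 1 := by
      rw [measure_add_measure_compl hKclosed.measurableSet, measure_univ]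
    calc (1 : ℝ≥0∞) = Measure.map (X n) (ℙ : Measure (Ω n)) K
          + Measure.map (X n) (ℙ : Measure (Ω n)) Kᶜ := huniv.symm
      _ ≤ Measure.map (X n) (ℙ : Measure (Ω n)) K + ε := add_le_add_right (hKle n) _
  · -- weak convergence
    intro g
    rw [Metric.tendsto_atTop]
    intro ε hε
    set B := ‖g‖ with hB
    have hB0 : 0 ≤ B := norm_nonneg g
    set ε₁ : ℝ := ε / 8 with hε₁def
    have hε₁0 : 0 < ε₁ := by positivity
    set θ : ℝ≥0∞ := ENNReal.ofReal (ε / (16 * (B + 1))) with hθ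
    have hθ0 : 0 < θ := ENNReal.ofReal_pos.2 (by positivity)
    have hθtop : θ ≠ ⊤ := ENNReal.ofReal_ne_top
    obtain ⟨K₁, hK₁comp, hK₁closed, hK₁le⟩ := htightX θ hθ0
    -- tightness for Y alone
    have hYnormB : ∀ e : ℝ≥0∞, 0 < e →
        ∃ M : ℝ, ∀ _i : Unit, (Measure.map Y (ℙ : Measure Ω')) (normSet M)ᶜ ≤ e := by
      intro e he
      obtain ⟨M, hM⟩ := exists_normSet_nat (Measure.map Y (ℙ : Measure Ω')) he
      exact ⟨(M : ℝ), fun _ => hM⟩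
    have hYmodB : ∀ c : ℝ, 0 < c → ∀ e : ℝ≥0∞, 0 < e →
        ∃ δ : ℝ, 0 < δ ∧ ∀ _i : Unit, (Measure.map Y (ℙ : Measure Ω')) (modSet δ c)ᶜ ≤ e := by
      intro c hc e he
      obtain ⟨mm, hmm1, hb⟩ := exists_modSet_nat (Measure.map Y (ℙ : Measure Ω')) hc he
      have : (0 : ℝ) < mm := by exact_mod_cast hmm1
      exact ⟨1 / (mm : ℝ), by positivity, fun _ => hb⟩
    obtain ⟨K₂, hK₂comp, hK₂closed, hK₂le⟩ :=
      tight_of_bounds (fun _ : Unit => Measure.map Y (ℙ : Measure Ω')) hYnormB hYmodB θ hθ0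
    set K : Set C(I, ℝ) := K₁ ∪ K₂ with hK
    have hKcomp : IsCompact K := hK₁comp.union hK₂comp
    have hKclosed : IsClosed K := hK₁closed.union hK₂closed
    obtain ⟨δg, hδg0, hδgprop⟩ := uniform_near_compact g.continuous hKcomp hε₁0
    obtain ⟨δ₂, hδ₂0, hδ₂prop⟩ := compact_uniform_equicontinuous hKcomp hδg0
    obtain ⟨m₀, hm₀⟩ := exists_nat_one_div_lt hδ₂0
    set m : ℕ := m₀ + 1 with hmdef
    have hm1 : 1 ≤ m := by omega
    have h1m : 1 / (m : ℝ) ≤ δ₂ := by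
      have hc : ((m₀ : ℝ) + 1) = (m : ℝ) := by push_cast [hmdef]; ring
      rw [← hc]
      exact hm₀.le
    have hint : ∀ f ∈ K, |g f - g (interpFun m (fun k => f (gptN m (k : ℕ))))| ≤ ε₁ := by
      intro f hf
      have hmodf : ∀ x y : I, dist x y ≤ 1 / (m : ℝ) → |f x - f y| ≤ δg :=
        fun x y hxy => hδ₂prop f hf x y (hxy.trans h1m)
      have hd := interp_dist hm1 f hδg0.le hmodf
      rw [dist_comm] at hd
      exact hδgprop f hf _ hd
    set G : (Fin (m + 1) → ℝ) →ᵇ ℝ :=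
      ⟨⟨fun v => g (interpFun m v), g.continuous.comp (interp_continuous hm1)⟩,
        ⟨2 * ‖g‖, fun v w => g.dist_le_two_norm _ _⟩⟩ with hG
    set t : Fin (m + 1) → I := fun i => gptN m (i : ℕ) with htdef
    have ht : Monotone t := fun i j hij => gptN_mono m (Fin.le_def.1 hij)
    obtain ⟨N, hN⟩ := Metric.tendsto_atTop.1 (hfdd (m + 1) t ht G) ε₁ hε₁0
    refine ⟨N, fun n hn => ?_⟩
    have hXK : (ℙ : Measure (Ω n)) (X n ⁻¹' Kᶜ) ≤ θ := by
      have h1 : (ℙ : Measure (Ω n)) (X n ⁻¹' Kᶜ)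
          = Measure.map (X n) (ℙ : Measure (Ω n)) Kᶜ :=
        (Measure.map_apply (hXmeas n) hKclosed.measurableSet.compl).symm
      rw [h1]
      calc Measure.map (X n) (ℙ : Measure (Ω n)) Kᶜ
          ≤ Measure.map (X n) (ℙ : Measure (Ω n)) K₁ᶜ :=
            measure_mono (Set.compl_subset_compl.2 Set.subset_union_left)
        _ ≤ θ := hK₁le n
    have hYK : (ℙ : Measure Ω') (Y ⁻¹' Kᶜ) ≤ θ := by
      have h1 : (ℙ : Measure Ω') (Y ⁻¹' Kᶜ) = Measure.map Y (ℙ : Measure Ω') Kᶜ :=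
        (Measure.map_apply hYmeas hKclosed.measurableSet.compl).symm
      rw [h1]
      calc Measure.map Y (ℙ : Measure Ω') Kᶜ
          ≤ Measure.map Y (ℙ : Measure Ω') K₂ᶜ :=
            measure_mono (Set.compl_subset_compl.2 Set.subset_union_right)
        _ ≤ θ := hK₂le ()
    have hXclose := integral_interp_close (X n) (hXmeas n) g hKclosed hm1 hε₁0.le hint
    have hYclose := integral_interp_close Y hYmeas g hKclosed hm1 hε₁0.le hint
    have hθreal : θ.toReal = ε / (16 * (B + 1)) := ENNReal.toReal_ofReal (by positivity)
    have hθXr : ((ℙ : Measure (Ω n)) (X n ⁻¹' Kᶜ)).toReal ≤ ε / (16 * (B + 1)) := by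
      rw [← hθreal]
      exact ENNReal.toReal_mono hθtop hXK
    have hθYr : ((ℙ : Measure Ω') (Y ⁻¹' Kᶜ)).toReal ≤ ε / (16 * (B + 1)) := by
      rw [← hθreal]
      exact ENNReal.toReal_mono hθtop hYK
    have h2B : 2 * B * (ε / (16 * (B + 1))) ≤ ε / 8 := by
      have heq : 2 * B * (ε / (16 * (B + 1))) = (B / (B + 1)) * (ε / 8) := by
        field_simp
        ring
      rw [heq]
      calc (B / (B + 1)) * (ε / 8) ≤ 1 * (ε / 8) := by
            apply mul_le_mul_of_nonneg_right ?_ (by positivity)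
            rw [div_le_one (by positivity)]
            linarith
        _ = ε / 8 := one_mul _
    have hmid := hN n hn
    have hmid' : |(∫ ω, g (interpFun m (fun k => X n ω (gptN m (k : ℕ)))) ∂(ℙ : Measure (Ω n)))
        - ∫ ω, g (interpFun m (fun k => Y ω (gptN m (k : ℕ)))) ∂(ℙ : Measure Ω')| < ε₁ := by
      rw [Real.dist_eq] at hmid
      exact hmid
    have hX1 : |(∫ ω, g (X n ω) ∂(ℙ : Measure (Ω n)))
        - ∫ ω, g (interpFun m (fun k => X n ω (gptN m (k : ℕ)))) ∂(ℙ : Measure (Ω n))|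
        ≤ ε₁ + ε / 8 := by
      refine hXclose.trans ?_
      have : 2 * ‖g‖ * ((ℙ : Measure (Ω n)) (X n ⁻¹' Kᶜ)).toReal ≤ ε / 8 := by
        refine le_trans ?_ h2B
        apply mul_le_mul_of_nonneg_left hθXr (by positivity)
      linarith
    have hY1 : |(∫ ω, g (Y ω) ∂(ℙ : Measure Ω'))
        - ∫ ω, g (interpFun m (fun k => Y ω (gptN m (k : ℕ)))) ∂(ℙ : Measure Ω')|
        ≤ ε₁ + ε / 8 := by
      refine hYclose.trans ?_
      have : 2 * ‖g‖ * ((ℙ : Measure Ω') (Y ⁻¹' Kᶜ)).toReal ≤ ε / 8 := by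
        refine le_trans ?_ h2B
        apply mul_le_mul_of_nonneg_left hθYr (by positivity)
      linarith
    rw [Real.dist_eq]
    set a := ∫ ω, g (X n ω) ∂(ℙ : Measure (Ω n)) with ha
    set b := ∫ ω, g (interpFun m (fun k => X n ω (gptN m (k : ℕ)))) ∂(ℙ : Measure (Ω n)) with hb
    set c := ∫ ω, g (interpFun m (fun k => Y ω (gptN m (k : ℕ)))) ∂(ℙ : Measure Ω') with hcc
    set dd := ∫ ω, g (Y ω) ∂(ℙ : Measure Ω') with hdd
    have htri : |a - dd| ≤ |a - b| + |b - c| + |c - dd| := by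
      calc |a - dd| ≤ |a - b| + |b - dd| := abs_sub_le a b dd
        _ ≤ |a - b| + (|b - c| + |c - dd|) := by
            exact add_le_add_right (abs_sub_le b c dd) _
        _ = |a - b| + |b - c| + |c - dd| := by ring
    have hcd : |c - dd| ≤ ε₁ + ε / 8 := by
      rw [abs_sub_comm]
      exact hY1
    calc |a - dd| ≤ |a - b| + |b - c| + |c - dd| := htri
      _ < (ε₁ + ε / 8) + ε₁ + (ε₁ + ε / 8) := by
          have h1 := hX1
          have h2 := hmid'
          linarith
      _ ≤ ε := by
          rw [hε₁def]
          linarith
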